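/- arXiv:2302.03370 — 3 statements merged into one kernel-verified Lean document; each statement's English description precedes it below -/
import Mathlib

section
/- Let K be a bounded convex open set in ℝᵈ and u ∈ H¹(K) with ∫_K u dx = 0. Then ‖u‖_{L²(K)} ≤ C · (diam K)^{1+d/2} / |K|^{1/2} · ‖∇u‖_{L²(K)}, where C depends only on d. -/
open MeasureTheory ENNReal Set Metric

section Aux

variable {d : ℕ}

lemma my_cs {α : Type*} [MeasurableSpace α] (μ : Measure α) (f : α → ℝ≥0∞)
    (hf : AEMeasurable f μ) :
    (∫⁻ a, f a ∂μ) ^ 2 ≤ (∫⁻ a, (f a) ^ 2 ∂μ) * μ Set.univ := by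
  have hpq : Real.HolderConjugate 2 2 := Real.HolderConjugate.two_two
  have h := ENNReal.lintegral_mul_le_Lp_mul_Lq μ hpq hf aemeasurable_const (g := fun _ => 1)
  simp only [Pi.mul_apply, mul_one, ENNReal.one_rpow, lintegral_one, lintegral_const] at h
  have h2 : ∀ x : ℝ≥0∞, x ^ (2:ℝ) = x ^ 2 := fun x => by
    rw [← ENNReal.rpow_natCast x 2]; norm_num
  have h3 : ∀ x : ℝ≥0∞, (x ^ (1/(2:ℝ))) ^ 2 = x := fun x => by
    rw [← ENNReal.rpow_natCast (x ^ (1/(2:ℝ))) 2, ← ENNReal.rpow_mul]; norm_num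
  calc (∫⁻ a, f a ∂μ) ^ 2
      ≤ ((∫⁻ a, f a ^ (2:ℝ) ∂μ) ^ (1/(2:ℝ)) * (μ Set.univ) ^ (1/(2:ℝ))) ^ 2 :=
        pow_le_pow_left' h 2
    _ = (∫⁻ a, (f a) ^ 2 ∂μ) * μ Set.univ := by
        rw [mul_pow, h3, h3]
        exact congrArg₂ _ (lintegral_congr fun a => (h2 (f a))) rfl

lemma my_half_pow : ∀ x : ℝ≥0∞, (x ^ (1/(2:ℝ))) ^ 2 = x := fun x => by
  rw [← ENNReal.rpow_natCast (x ^ (1/(2:ℝ))) 2, ← ENNReal.rpow_mul]; norm_num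

lemma my_pow_half : ∀ x : ℝ≥0∞, (x ^ 2) ^ (1/(2:ℝ)) = x := fun x => by
  rw [← ENNReal.rpow_natCast x 2, ← ENNReal.rpow_mul]; norm_num

lemma my_cov (G : EuclideanSpace ℝ (Fin d) → ℝ≥0∞) (hG : Measurable G)
    {a : ℝ} (ha : a ≠ 0) (c : EuclideanSpace ℝ (Fin d)) :
    ∫⁻ y, G (a • y + c) = ENNReal.ofReal |(a ^ d)⁻¹| * ∫⁻ z, G z := by
  have h1 := lintegral_map (μ := volume) (f := fun z => G (z + c)) (g := fun y => a • y)
    (hG.comp (measurable_add_const c)) (measurable_const_smul a)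
  have h2 : Measure.map (fun y : EuclideanSpace ℝ (Fin d) => a • y) volume
      = ENNReal.ofReal |(a ^ d)⁻¹| • volume := by
    have := Measure.map_addHaar_smul (volume : Measure (EuclideanSpace ℝ (Fin d))) ha
    simpa [finrank_euclideanSpace_fin] using this
  rw [h2] at h1
  rw [← h1]
  simp only [lintegral_smul_measure]
  congr 1
  exact lintegral_add_right_eq_self (fun z => G z) c

lemma my_ftc {K : Set (EuclideanSpace ℝ (Fin d))}
    {u : EuclideanSpace ℝ (Fin d) → ℝ} (hK : IsOpen K) (hconv : Convex ℝ K)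
    (hu : ContDiffOn ℝ 1 u K) {x y : EuclideanSpace ℝ (Fin d)} (hx : x ∈ K) (hy : y ∈ K)
    {D : ℝ} (hD : ‖x - y‖ ≤ D) :
    |u x - u y| ≤ ∫ t in (0:ℝ)..1, D * ‖fderiv ℝ u ((1 - t) • y + t • x)‖ := by
  set γ : ℝ → EuclideanSpace ℝ (Fin d) := fun t => (1 - t) • y + t • x with hγdef
  have hγeq : γ = fun t => t • (x - y) + y := by
    funext t; simp only [hγdef]; module
  have hγcont : Continuous γ := by
    rw [hγeq]; fun_prop
  have hγmem : ∀ t ∈ Icc (0:ℝ) 1, γ t ∈ K := fun t ht =>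
    hconv hy hx (by linarith [ht.2]) ht.1 (by ring)
  have hγderiv : ∀ t : ℝ, HasDerivAt γ (x - y) t := by
    intro t
    rw [hγeq]
    simpa using ((hasDerivAt_id t).smul_const (x - y)).add_const y
  have hudiff : ∀ t ∈ Icc (0:ℝ) 1, HasDerivAt (fun s => u (γ s)) (fderiv ℝ u (γ t) (x - y)) t := by
    intro t ht
    have hd : DifferentiableAt ℝ u (γ t) :=
      (hu.differentiableOn one_ne_zero).differentiableAt (hK.mem_nhds (hγmem t ht))
    exact hd.hasFDerivAt.comp_hasDerivAt t (hγderiv t)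
  have hfc : ContinuousOn (fderiv ℝ u) K := hu.continuousOn_fderiv_of_isOpen hK le_rfl
  have hφcont : ContinuousOn (fun t => fderiv ℝ u (γ t) (x - y)) (Icc (0:ℝ) 1) :=
    ((hfc.comp hγcont.continuousOn hγmem).clm_apply continuousOn_const)
  have hgcont : ContinuousOn (fun t => ‖fderiv ℝ u (γ t)‖) (Icc (0:ℝ) 1) :=
    (hfc.comp hγcont.continuousOn hγmem).norm
  have hint : IntervalIntegrable (fun t => fderiv ℝ u (γ t) (x - y)) volume 0 1 :=
    (hφcont.mono (by rw [uIcc_of_le zero_le_one])).intervalIntegrable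
  have hftc := intervalIntegral.integral_eq_sub_of_hasDerivAt
    (f := fun s => u (γ s)) (f' := fun t => fderiv ℝ u (γ t) (x - y))
    (fun t ht => hudiff t (by rwa [uIcc_of_le zero_le_one] at ht)) hint
  have hγ0 : γ 0 = y := by simp [hγdef]
  have hγ1 : γ 1 = x := by simp [hγdef]
  simp only [hγ0, hγ1] at hftc
  calc |u x - u y| = |∫ t in (0:ℝ)..1, fderiv ℝ u (γ t) (x - y)| := by rw [hftc]
    _ ≤ ∫ t in (0:ℝ)..1, |fderiv ℝ u (γ t) (x - y)| :=
        intervalIntegral.abs_integral_le_integral_abs zero_le_one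
    _ ≤ ∫ t in (0:ℝ)..1, D * ‖fderiv ℝ u (γ t)‖ := by
        apply intervalIntegral.integral_mono_on zero_le_one
        · exact (hφcont.abs.mono (by rw [uIcc_of_le zero_le_one])).intervalIntegrable
        · exact ((continuousOn_const.mul hgcont).mono
            (by rw [uIcc_of_le zero_le_one])).intervalIntegrable
        · intro t ht
          calc |fderiv ℝ u (γ t) (x - y)| = ‖fderiv ℝ u (γ t) (x - y)‖ := rfl
            _ ≤ ‖fderiv ℝ u (γ t)‖ * ‖x - y‖ := ContinuousLinearMap.le_opNorm _ _
            _ ≤ ‖fderiv ℝ u (γ t)‖ * D := mul_le_mul_of_nonneg_left hD (norm_nonneg _)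
            _ = D * ‖fderiv ℝ u (γ t)‖ := mul_comm _ _

set_option maxHeartbeats 1000000 in
lemma main_bound {K : Set (EuclideanSpace ℝ (Fin d))} {u : EuclideanSpace ℝ (Fin d) → ℝ}
    (hK : IsOpen K) (hconv : Convex ℝ K) (hKb : Bornology.IsBounded K) (hKpos : 0 < volume K)
    (hu : ContDiffOn ℝ 1 u K) (huint : IntegrableOn u K volume)
    (hu2int : IntegrableOn (fun x => (u x) ^ 2) K volume)
    (hg2int : IntegrableOn (fun x => ‖fderiv ℝ u x‖ ^ 2) K volume)
    (hmean : (∫ x in K, u x) = 0) :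
    (∫ x in K, (u x) ^ 2) ≤ 2 ^ (d + 1) * (Metric.diam K) ^ 2 * ∫ x in K, ‖fderiv ℝ u x‖ ^ 2 := by
  set D := Metric.diam K with hDdef
  have hD0 : 0 ≤ D := Metric.diam_nonneg
  have hKm : MeasurableSet K := hK.measurableSet
  have hmtop : volume K ≠ ⊤ := hKb.measure_lt_top.ne
  have hm0 : volume K ≠ 0 := hKpos.ne'
  set g : EuclideanSpace ℝ (Fin d) → ℝ := fun z => ‖fderiv ℝ u z‖ with hgdef
  have hgmeas : Measurable g := (measurable_fderiv ℝ u).norm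
  set G : EuclideanSpace ℝ (Fin d) → ℝ≥0∞ :=
    K.indicator (fun z => ENNReal.ofReal (g z ^ 2)) with hGdef
  have hGmeas : Measurable G := ((hgmeas.pow_const 2).ennreal_ofReal).indicator hKm
  have hpK : ∀ {x y : EuclideanSpace ℝ (Fin d)}, x ∈ K → y ∈ K → ∀ t ∈ Icc (0:ℝ) 1,
      (1 - t) • y + t • x ∈ K := fun hx hy t ht =>
    hconv hy hx (by linarith [ht.2]) ht.1 (by ring)
  set B : EuclideanSpace ℝ (Fin d) → EuclideanSpace ℝ (Fin d) → ℝ≥0∞ := fun x y =>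
    ∫⁻ t in Icc (0:ℝ) 1, ENNReal.ofReal (D ^ 2 * g ((1 - t) • y + t • x) ^ 2) with hBdef
  -- measurability helpers
  have hmeas1 : ∀ x : EuclideanSpace ℝ (Fin d), Measurable fun q : EuclideanSpace ℝ (Fin d) × ℝ =>
      ENNReal.ofReal (D ^ 2 * g ((1 - q.2) • q.1 + q.2 • x) ^ 2) := by
    intro x
    have hc : Continuous fun q : EuclideanSpace ℝ (Fin d) × ℝ => (1 - q.2) • q.1 + q.2 • x := by
      fun_prop
    exact (measurable_const.mul ((hgmeas.comp hc.measurable).pow_const 2)).ennreal_ofReal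
  have hBmeas : ∀ x, Measurable fun y => B x y := fun x => (hmeas1 x).lintegral_prod_right'
  -- Step 1
  have step1 : ∀ x ∈ K, ∀ y ∈ K, ENNReal.ofReal |u x - u y| ≤ (B x y) ^ (1/(2:ℝ)) := by
    intro x hx y hy
    have hdist : ‖x - y‖ ≤ D := by
      rw [← dist_eq_norm]; exact Metric.dist_le_diam_of_mem hKb hx hy
    have h1 := my_ftc hK hconv hu hx hy hdist
    have hfc : ContinuousOn (fderiv ℝ u) K := hu.continuousOn_fderiv_of_isOpen hK le_rfl
    have hγcont : Continuous fun t : ℝ => (1 - t) • y + t • x := by fun_prop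
    have hhc : ContinuousOn (fun t : ℝ => D * g ((1 - t) • y + t • x)) (Icc 0 1) :=
      continuousOn_const.mul ((hfc.comp hγcont.continuousOn (hpK hx hy)).norm)
    have hhnn : ∀ t : ℝ, 0 ≤ D * g ((1 - t) • y + t • x) := fun t =>
      mul_nonneg hD0 (norm_nonneg _)
    have hInt : IntegrableOn (fun t : ℝ => D * g ((1 - t) • y + t • x)) (Icc 0 1) volume :=
      hhc.integrableOn_compact isCompact_Icc
    have h2 : ENNReal.ofReal (∫ t in (0:ℝ)..1, D * g ((1 - t) • y + t • x))
        = ∫⁻ t in Icc (0:ℝ) 1, ENNReal.ofReal (D * g ((1 - t) • y + t • x)) := by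
      rw [intervalIntegral.integral_of_le zero_le_one, ← integral_Icc_eq_integral_Ioc,
        ofReal_integral_eq_lintegral_ofReal hInt (ae_of_all _ hhnn)]
    have hmeasf : AEMeasurable (fun t : ℝ => ENNReal.ofReal (D * g ((1 - t) • y + t • x)))
        (volume.restrict (Icc 0 1)) :=
      ((measurable_const.mul (hgmeas.comp hγcont.measurable)).ennreal_ofReal).aemeasurable
    have hcs := my_cs (volume.restrict (Icc (0:ℝ) 1)) _ hmeasf
    have hμ1 : (volume.restrict (Icc (0:ℝ) 1)) Set.univ = 1 := by
      rw [Measure.restrict_apply_univ, Real.volume_Icc]; norm_num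
    rw [hμ1, mul_one] at hcs
    have hcs' : (∫⁻ t in Icc (0:ℝ) 1, ENNReal.ofReal (D * g ((1 - t) • y + t • x))) ^ 2
        ≤ B x y := by
      refine hcs.trans_eq (lintegral_congr fun t => ?_)
      rw [← ENNReal.ofReal_pow (hhnn t)]
      congr 1
      ring
    calc ENNReal.ofReal |u x - u y|
        ≤ ENNReal.ofReal (∫ t in (0:ℝ)..1, D * g ((1 - t) • y + t • x)) :=
          ENNReal.ofReal_le_ofReal h1
      _ = ∫⁻ t in Icc (0:ℝ) 1, ENNReal.ofReal (D * g ((1 - t) • y + t • x)) := h2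
      _ = ((∫⁻ t in Icc (0:ℝ) 1, ENNReal.ofReal (D * g ((1 - t) • y + t • x))) ^ 2) ^ (1/(2:ℝ)) :=
          (my_pow_half _).symm
      _ ≤ (B x y) ^ (1/(2:ℝ)) := ENNReal.rpow_le_rpow hcs' (by norm_num)
  -- Step 2
  have step2 : ∀ x ∈ K, ENNReal.ofReal (u x ^ 2) * volume K ≤ ∫⁻ y in K, B x y := by
    intro x hx
    set m := (volume K).toReal with hmdef
    have hconst : IntegrableOn (fun _ : EuclideanSpace ℝ (Fin d) => u x) K volume :=
      integrableOn_const hKb.measure_lt_top.ne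
    have hdiffint : IntegrableOn (fun y => u x - u y) K volume := hconst.sub huint
    have h1 : (∫ y in K, (u x - u y)) = u x * m := by
      rw [integral_sub hconst huint, hmean, sub_zero, setIntegral_const, smul_eq_mul, mul_comm]; rfl
    have h2 : |u x| * m ≤ ∫ y in K, |u x - u y| := by
      calc |u x| * m = |∫ y in K, (u x - u y)| := by
            rw [h1, abs_mul, abs_of_nonneg (ENNReal.toReal_nonneg : (0:ℝ) ≤ m)]
        _ ≤ ∫ y in K, |u x - u y| := by
            simpa [Real.norm_eq_abs] using
              norm_integral_le_integral_norm (μ := volume.restrict K) (fun y => u x - u y)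
    have h3 : ENNReal.ofReal (|u x| * m) ≤ ∫⁻ y in K, ENNReal.ofReal |u x - u y| := by
      calc ENNReal.ofReal (|u x| * m) ≤ ENNReal.ofReal (∫ y in K, |u x - u y|) :=
            ENNReal.ofReal_le_ofReal h2
        _ = ∫⁻ y in K, ENNReal.ofReal |u x - u y| :=
            ofReal_integral_eq_lintegral_ofReal hdiffint.abs (ae_of_all _ fun y => abs_nonneg _)
    have h4 : (∫⁻ y in K, ENNReal.ofReal |u x - u y|) ≤ ∫⁻ y in K, (B x y) ^ (1/(2:ℝ)) :=
      lintegral_mono_ae ((ae_restrict_iff' hKm).2 (ae_of_all _ fun y hy => step1 x hx y hy))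
    have h5 := my_cs (volume.restrict K) (fun y => (B x y) ^ (1/(2:ℝ)))
      ((ENNReal.continuous_rpow_const.measurable.comp (hBmeas x)).aemeasurable)
    rw [Measure.restrict_apply_univ] at h5
    have h6 : (∫⁻ y in K, ((B x y) ^ (1/(2:ℝ))) ^ 2) = ∫⁻ y in K, B x y :=
      lintegral_congr fun y => my_half_pow _
    have h7 : ENNReal.ofReal (|u x| * m) ^ 2 ≤ (∫⁻ y in K, B x y) * volume K := by
      calc ENNReal.ofReal (|u x| * m) ^ 2 ≤ (∫⁻ y in K, (B x y) ^ (1/(2:ℝ))) ^ 2 :=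
            pow_le_pow_left' (h3.trans h4) 2
        _ ≤ (∫⁻ y in K, B x y) * volume K := by rw [← h6]; exact h5
    have h8 : ENNReal.ofReal (|u x| * m) ^ 2 = ENNReal.ofReal (u x ^ 2) * volume K * volume K := by
      rw [ENNReal.ofReal_mul (abs_nonneg _), hmdef, ENNReal.ofReal_toReal hmtop, mul_pow,
        ← ENNReal.ofReal_pow (abs_nonneg _), sq_abs]
      ring
    rw [h8] at h7
    exact (ENNReal.mul_le_mul_iff_left hm0 hmtop).1 h7
  -- Step 3
  have hu2aemeas : AEMeasurable (fun x => ENNReal.ofReal (u x ^ 2)) (volume.restrict K) :=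
    (hu2int.aemeasurable).ennreal_ofReal
  have step3 : (∫⁻ x in K, ENNReal.ofReal (u x ^ 2)) * volume K
      ≤ ∫⁻ x in K, ∫⁻ y in K, B x y := by
    have h := lintegral_mono_ae (μ := volume.restrict K) ((ae_restrict_iff' hKm).2 (ae_of_all volume step2))
    rwa [lintegral_mul_const'' _ hu2aemeas] at h
  -- Step 4
  have hDne : (ENNReal.ofReal (D ^ 2)) ≠ ⊤ := ENNReal.ofReal_ne_top
  have step4 : (∫⁻ x in K, ∫⁻ y in K, B x y)
      = ENNReal.ofReal (D ^ 2) *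
        ∫⁻ x in K, ∫⁻ y in K, ∫⁻ t in Icc (0:ℝ) 1, G ((1 - t) • y + t • x) := by
    have hin : ∀ x ∈ K, ∀ y ∈ K, B x y
        = ENNReal.ofReal (D ^ 2) * ∫⁻ t in Icc (0:ℝ) 1, G ((1 - t) • y + t • x) := by
      intro x hx y hy
      simp only [hBdef]
      have heq : (∫⁻ t in Icc (0:ℝ) 1, ENNReal.ofReal (D ^ 2 * g ((1 - t) • y + t • x) ^ 2))
          = ∫⁻ t in Icc (0:ℝ) 1, ENNReal.ofReal (D ^ 2) * G ((1 - t) • y + t • x) := by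
        refine setLIntegral_congr_fun measurableSet_Icc (fun t ht => ?_)
        rw [hGdef, Set.indicator_of_mem (hpK hx hy t ht), ← ENNReal.ofReal_mul (sq_nonneg D)]
      rw [heq, lintegral_const_mul' _ _ hDne]
    calc (∫⁻ x in K, ∫⁻ y in K, B x y)
        = ∫⁻ x in K, ∫⁻ y in K,
            ENNReal.ofReal (D ^ 2) * ∫⁻ t in Icc (0:ℝ) 1, G ((1 - t) • y + t • x) := by
          refine lintegral_congr_ae ((ae_restrict_iff' hKm).2 (ae_of_all _ fun x hx => ?_))
          exact lintegral_congr_ae ((ae_restrict_iff' hKm).2 (ae_of_all _ fun y hy =>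
            hin x hx y hy))
      _ = ∫⁻ x in K,
            ENNReal.ofReal (D ^ 2) * ∫⁻ y in K, ∫⁻ t in Icc (0:ℝ) 1, G ((1 - t) • y + t • x) :=
          lintegral_congr fun x => lintegral_const_mul' _ _ hDne
      _ = ENNReal.ofReal (D ^ 2) *
            ∫⁻ x in K, ∫⁻ y in K, ∫⁻ t in Icc (0:ℝ) 1, G ((1 - t) • y + t • x) :=
          lintegral_const_mul' _ _ hDne
  -- Step 5 : bound the triple integral
  set IG : ℝ≥0∞ := ∫⁻ z, G z with hIGdef
  have c2def : (0:ℝ) ≤ 2 ^ d := by positivity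
  -- inner bounds
  have hbound1 : ∀ x : EuclideanSpace ℝ (Fin d), ∀ t ∈ Icc (0:ℝ) 2⁻¹,
      (∫⁻ y in K, G ((1 - t) • y + t • x)) ≤ ENNReal.ofReal (2 ^ d) * IG := by
    intro x t ht
    have h1t : (1:ℝ) - t ≠ 0 := by
      have := ht.2; intro h; rw [sub_eq_zero] at h; rw [← h] at this; norm_num at this
    calc (∫⁻ y in K, G ((1 - t) • y + t • x)) ≤ ∫⁻ y, G ((1 - t) • y + t • x) :=
          setLIntegral_le_lintegral _ _
      _ = ENNReal.ofReal |((1 - t) ^ d)⁻¹| * IG := my_cov G hGmeas h1t (t • x)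
      _ ≤ ENNReal.ofReal (2 ^ d) * IG := by
          apply mul_le_mul_left
          apply ENNReal.ofReal_le_ofReal
          have hhf : (2⁻¹:ℝ) ≤ 1 - t := by linarith [ht.2]
          have hp : ((2:ℝ)⁻¹) ^ d ≤ (1 - t) ^ d := pow_le_pow_left₀ (by norm_num) hhf d
          have h1tnn : (0:ℝ) ≤ 1 - t := le_trans (by norm_num) hhf
          rw [abs_of_nonneg (inv_nonneg.2 (pow_nonneg h1tnn d))]
          calc ((1 - t) ^ d)⁻¹ ≤ (((2:ℝ)⁻¹) ^ d)⁻¹ :=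
                inv_anti₀ (by positivity) hp
            _ = 2 ^ d := by rw [← inv_pow, inv_inv]
  have hbound2 : ∀ y : EuclideanSpace ℝ (Fin d), ∀ t ∈ Ioc (2⁻¹:ℝ) 1,
      (∫⁻ x in K, G ((1 - t) • y + t • x)) ≤ ENNReal.ofReal (2 ^ d) * IG := by
    intro y t ht
    have h1t : t ≠ 0 := by
      have := ht.1; intro h; rw [h] at this; norm_num at this
    have hrw : (∫⁻ x in K, G ((1 - t) • y + t • x)) = ∫⁻ x in K, G (t • x + (1 - t) • y) :=
      lintegral_congr fun x => by rw [add_comm]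
    calc (∫⁻ x in K, G ((1 - t) • y + t • x))
        ≤ ∫⁻ x, G (t • x + (1 - t) • y) := by
          rw [hrw]; exact setLIntegral_le_lintegral _ _
      _ = ENNReal.ofReal |(t ^ d)⁻¹| * IG := my_cov G hGmeas h1t ((1 - t) • y)
      _ ≤ ENNReal.ofReal (2 ^ d) * IG := by
          apply mul_le_mul_left
          apply ENNReal.ofReal_le_ofReal
          have hhf : (2⁻¹:ℝ) ≤ t := le_of_lt ht.1
          have hp : ((2:ℝ)⁻¹) ^ d ≤ t ^ d := pow_le_pow_left₀ (by norm_num) hhf d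
          have htnn : (0:ℝ) ≤ t := le_trans (by norm_num) hhf
          rw [abs_of_nonneg (inv_nonneg.2 (pow_nonneg htnn d))]
          calc (t ^ d)⁻¹ ≤ (((2:ℝ)⁻¹) ^ d)⁻¹ := inv_anti₀ (by positivity) hp
            _ = 2 ^ d := by rw [← inv_pow, inv_inv]
  -- measurability of the G-composition, uncurried both ways
  have hGq : ∀ x : EuclideanSpace ℝ (Fin d), Measurable fun q : EuclideanSpace ℝ (Fin d) × ℝ =>
      G ((1 - q.2) • q.1 + q.2 • x) := by
    intro x
    have hc : Continuous fun q : EuclideanSpace ℝ (Fin d) × ℝ => (1 - q.2) • q.1 + q.2 • x := by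
      fun_prop
    exact hGmeas.comp hc.measurable
  have hGq2 : ∀ y : EuclideanSpace ℝ (Fin d), Measurable fun q : EuclideanSpace ℝ (Fin d) × ℝ =>
      G ((1 - q.2) • y + q.2 • q.1) := by
    intro y
    have hc : Continuous fun q : EuclideanSpace ℝ (Fin d) × ℝ => (1 - q.2) • y + q.2 • q.1 := by
      fun_prop
    exact hGmeas.comp hc.measurable
  -- split the t integral
  have hsplit : ∀ x y : EuclideanSpace ℝ (Fin d),
      (∫⁻ t in Icc (0:ℝ) 1, G ((1 - t) • y + t • x))
        = (∫⁻ t in Icc (0:ℝ) 2⁻¹, G ((1 - t) • y + t • x))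
          + ∫⁻ t in Ioc (2⁻¹:ℝ) 1, G ((1 - t) • y + t • x) := by
    intro x y
    rw [← lintegral_union measurableSet_Ioc
      ((Set.Iic_disjoint_Ioc le_rfl).mono Set.Icc_subset_Iic_self le_rfl),
      Set.Icc_union_Ioc_eq_Icc (by norm_num) (by norm_num)]
  -- part 1
  have hpart1 : ∀ x : EuclideanSpace ℝ (Fin d),
      (∫⁻ y in K, ∫⁻ t in Icc (0:ℝ) 2⁻¹, G ((1 - t) • y + t • x))
        ≤ ENNReal.ofReal (2 ^ d) * IG := by
    intro x
    rw [lintegral_lintegral_swap ((hGq x).aemeasurable)]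
    calc (∫⁻ t in Icc (0:ℝ) 2⁻¹, ∫⁻ y in K, G ((1 - t) • y + t • x))
        ≤ ∫⁻ _ in Icc (0:ℝ) 2⁻¹, ENNReal.ofReal (2 ^ d) * IG :=
          lintegral_mono_ae ((ae_restrict_iff' measurableSet_Icc).2 (ae_of_all _ (hbound1 x)))
      _ = (ENNReal.ofReal (2 ^ d) * IG) * volume (Icc (0:ℝ) 2⁻¹) := setLIntegral_const _ _
      _ ≤ (ENNReal.ofReal (2 ^ d) * IG) * 1 := by
          apply mul_le_mul_right
          rw [Real.volume_Icc]
          exact ENNReal.ofReal_le_one.2 (by norm_num)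
      _ = ENNReal.ofReal (2 ^ d) * IG := mul_one _
  -- part 2 (swap x and y outer, then x and t)
  have hpart2pt : ∀ y : EuclideanSpace ℝ (Fin d),
      (∫⁻ x in K, ∫⁻ t in Ioc (2⁻¹:ℝ) 1, G ((1 - t) • y + t • x))
        ≤ ENNReal.ofReal (2 ^ d) * IG := by
    intro y
    rw [lintegral_lintegral_swap ((hGq2 y).aemeasurable)]
    calc (∫⁻ t in Ioc (2⁻¹:ℝ) 1, ∫⁻ x in K, G ((1 - t) • y + t • x))
        ≤ ∫⁻ _ in Ioc (2⁻¹:ℝ) 1, ENNReal.ofReal (2 ^ d) * IG :=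
          lintegral_mono_ae ((ae_restrict_iff' measurableSet_Ioc).2 (ae_of_all _ (hbound2 y)))
      _ = (ENNReal.ofReal (2 ^ d) * IG) * volume (Ioc (2⁻¹:ℝ) 1) := setLIntegral_const _ _
      _ ≤ (ENNReal.ofReal (2 ^ d) * IG) * 1 := by
          apply mul_le_mul_right
          rw [Real.volume_Ioc]
          exact ENNReal.ofReal_le_one.2 (by norm_num)
      _ = ENNReal.ofReal (2 ^ d) * IG := mul_one _
  -- measurable inner y-integrals (for additivity and swapping)
  have hmeasy1 : ∀ x : EuclideanSpace ℝ (Fin d),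
      Measurable fun y => ∫⁻ t in Icc (0:ℝ) 2⁻¹, G ((1 - t) • y + t • x) := fun x =>
    (hGq x).lintegral_prod_right'
  have hmeasy2 : ∀ x : EuclideanSpace ℝ (Fin d),
      Measurable fun y => ∫⁻ t in Ioc (2⁻¹:ℝ) 1, G ((1 - t) • y + t • x) := fun x =>
    (hGq x).lintegral_prod_right'
  have hmeasxy2 : Measurable fun q : EuclideanSpace ℝ (Fin d) × EuclideanSpace ℝ (Fin d) =>
      ∫⁻ t in Ioc (2⁻¹:ℝ) 1, G ((1 - t) • q.2 + t • q.1) := by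
    have hc : Measurable fun q : (EuclideanSpace ℝ (Fin d) × EuclideanSpace ℝ (Fin d)) × ℝ =>
        G ((1 - q.2) • q.1.2 + q.2 • q.1.1) := by
      have hcc : Continuous fun q : (EuclideanSpace ℝ (Fin d) × EuclideanSpace ℝ (Fin d)) × ℝ =>
          (1 - q.2) • q.1.2 + q.2 • q.1.1 := by fun_prop
      exact hGmeas.comp hcc.measurable
    exact hc.lintegral_prod_right'
  -- W1 measurable (uncurried over pairs (x,y))
  have hmeasW1 : Measurable fun q : EuclideanSpace ℝ (Fin d) × EuclideanSpace ℝ (Fin d) =>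
      ∫⁻ t in Icc (0:ℝ) 2⁻¹, G ((1 - t) • q.2 + t • q.1) := by
    have hc : Measurable fun q : (EuclideanSpace ℝ (Fin d) × EuclideanSpace ℝ (Fin d)) × ℝ =>
        G ((1 - q.2) • q.1.2 + q.2 • q.1.1) := by
      have hcc : Continuous fun q : (EuclideanSpace ℝ (Fin d) × EuclideanSpace ℝ (Fin d)) × ℝ =>
          (1 - q.2) • q.1.2 + q.2 • q.1.1 := by fun_prop
      exact hGmeas.comp hcc.measurable
    exact hc.lintegral_prod_right'
  -- total bound on S
  have step5 : (∫⁻ x in K, ∫⁻ y in K, ∫⁻ t in Icc (0:ℝ) 1, G ((1 - t) • y + t • x))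
      ≤ 2 * (ENNReal.ofReal (2 ^ d) * IG) * volume K := by
    have hS : (∫⁻ x in K, ∫⁻ y in K, ∫⁻ t in Icc (0:ℝ) 1, G ((1 - t) • y + t • x))
        = (∫⁻ x in K, ∫⁻ y in K, ∫⁻ t in Icc (0:ℝ) 2⁻¹, G ((1 - t) • y + t • x))
          + ∫⁻ x in K, ∫⁻ y in K, ∫⁻ t in Ioc (2⁻¹:ℝ) 1, G ((1 - t) • y + t • x) := by
      calc (∫⁻ x in K, ∫⁻ y in K, ∫⁻ t in Icc (0:ℝ) 1, G ((1 - t) • y + t • x))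
          = ∫⁻ x in K, ((∫⁻ y in K, ∫⁻ t in Icc (0:ℝ) 2⁻¹, G ((1 - t) • y + t • x))
              + ∫⁻ y in K, ∫⁻ t in Ioc (2⁻¹:ℝ) 1, G ((1 - t) • y + t • x)) := by
            refine lintegral_congr fun x => ?_
            rw [← lintegral_add_left (hmeasy1 x)]
            exact lintegral_congr fun y => hsplit x y
        _ = _ := lintegral_add_left (hmeasW1.lintegral_prod_right') _
    rw [hS]
    have hS1 : (∫⁻ x in K, ∫⁻ y in K, ∫⁻ t in Icc (0:ℝ) 2⁻¹, G ((1 - t) • y + t • x))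
        ≤ (ENNReal.ofReal (2 ^ d) * IG) * volume K := by
      calc (∫⁻ x in K, ∫⁻ y in K, ∫⁻ t in Icc (0:ℝ) 2⁻¹, G ((1 - t) • y + t • x))
          ≤ ∫⁻ _ in K, ENNReal.ofReal (2 ^ d) * IG :=
            lintegral_mono_ae ((ae_restrict_iff' hKm).2 (ae_of_all _ fun x _ => hpart1 x))
        _ = (ENNReal.ofReal (2 ^ d) * IG) * volume K := setLIntegral_const _ _
    have hS2 : (∫⁻ x in K, ∫⁻ y in K, ∫⁻ t in Ioc (2⁻¹:ℝ) 1, G ((1 - t) • y + t • x))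
        ≤ (ENNReal.ofReal (2 ^ d) * IG) * volume K := by
      rw [lintegral_lintegral_swap (μ := volume.restrict K) (ν := volume.restrict K)
        (f := fun x y => ∫⁻ t in Ioc (2⁻¹:ℝ) 1, G ((1 - t) • y + t • x))
        (hmeasxy2.aemeasurable)]
      calc (∫⁻ y in K, ∫⁻ x in K, ∫⁻ t in Ioc (2⁻¹:ℝ) 1, G ((1 - t) • y + t • x))
          ≤ ∫⁻ _ in K, ENNReal.ofReal (2 ^ d) * IG :=
            lintegral_mono_ae ((ae_restrict_iff' hKm).2 (ae_of_all _ fun y _ => hpart2pt y))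
        _ = (ENNReal.ofReal (2 ^ d) * IG) * volume K := setLIntegral_const _ _
    calc (∫⁻ x in K, ∫⁻ y in K, ∫⁻ t in Icc (0:ℝ) 2⁻¹, G ((1 - t) • y + t • x))
          + (∫⁻ x in K, ∫⁻ y in K, ∫⁻ t in Ioc (2⁻¹:ℝ) 1, G ((1 - t) • y + t • x))
        ≤ (ENNReal.ofReal (2 ^ d) * IG) * volume K + (ENNReal.ofReal (2 ^ d) * IG) * volume K :=
          add_le_add hS1 hS2
      _ = 2 * (ENNReal.ofReal (2 ^ d) * IG) * volume K := by ring
  -- combine everything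
  have hgn : (0:ℝ) ≤ ∫ x in K, g x ^ 2 := integral_nonneg fun x => sq_nonneg _
  have hconsts : ENNReal.ofReal (D ^ 2) * (2 * (ENNReal.ofReal (2 ^ d) * IG) * volume K)
      = (ENNReal.ofReal (2 ^ (d + 1) * D ^ 2) * IG) * volume K := by
    have hmul : ENNReal.ofReal (D ^ 2) * ((2:ℝ≥0∞) * ENNReal.ofReal (2 ^ d))
        = ENNReal.ofReal (2 ^ (d + 1) * D ^ 2) := by
      rw [(by norm_num : (2:ℝ≥0∞) = ENNReal.ofReal 2),
        ← ENNReal.ofReal_mul (by norm_num : (0:ℝ) ≤ 2), ← ENNReal.ofReal_mul (by positivity)]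
      congr 1
      ring
    calc ENNReal.ofReal (D ^ 2) * (2 * (ENNReal.ofReal (2 ^ d) * IG) * volume K)
        = (ENNReal.ofReal (D ^ 2) * ((2:ℝ≥0∞) * ENNReal.ofReal (2 ^ d))) * IG * volume K := by
          ring
      _ = (ENNReal.ofReal (2 ^ (d + 1) * D ^ 2) * IG) * volume K := by
          rw [hmul]
  have step6 : (∫⁻ x in K, ENNReal.ofReal (u x ^ 2))
      ≤ ENNReal.ofReal (2 ^ (d + 1) * D ^ 2) * IG := by
    refine (ENNReal.mul_le_mul_iff_left hm0 hmtop).1 ?_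
    calc (∫⁻ x in K, ENNReal.ofReal (u x ^ 2)) * volume K
        ≤ ∫⁻ x in K, ∫⁻ y in K, B x y := step3
      _ = ENNReal.ofReal (D ^ 2) *
            ∫⁻ x in K, ∫⁻ y in K, ∫⁻ t in Icc (0:ℝ) 1, G ((1 - t) • y + t • x) := step4
      _ ≤ ENNReal.ofReal (D ^ 2) * (2 * (ENNReal.ofReal (2 ^ d) * IG) * volume K) :=
          mul_le_mul_right step5 _
      _ = (ENNReal.ofReal (2 ^ (d + 1) * D ^ 2) * IG) * volume K := hconsts
  have hIGK : IG = ∫⁻ z in K, ENNReal.ofReal (g z ^ 2) := by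
    rw [hIGdef, hGdef]
    exact lintegral_indicator hKm _
  have hofu : ENNReal.ofReal (∫ x in K, u x ^ 2) = ∫⁻ x in K, ENNReal.ofReal (u x ^ 2) :=
    ofReal_integral_eq_lintegral_ofReal hu2int (ae_of_all _ fun x => sq_nonneg _)
  have hofg : ENNReal.ofReal (∫ x in K, g x ^ 2) = ∫⁻ x in K, ENNReal.ofReal (g x ^ 2) :=
    ofReal_integral_eq_lintegral_ofReal hg2int (ae_of_all _ fun x => sq_nonneg _)
  have hfin : ENNReal.ofReal (∫ x in K, u x ^ 2)
      ≤ ENNReal.ofReal (2 ^ (d + 1) * D ^ 2 * ∫ x in K, g x ^ 2) := by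
    rw [hofu, ENNReal.ofReal_mul (by positivity), hofg]
    rw [hIGK] at step6
    exact step6
  exact (ENNReal.ofReal_le_ofReal_iff (by positivity)).1 hfin

end Aux

theorem poincare_friedrichs_convex (d : ℕ) :
    ∃ C : ℝ, 0 < C ∧
      ∀ (K : Set (EuclideanSpace ℝ (Fin d))) (u : EuclideanSpace ℝ (Fin d) → ℝ),
        IsOpen K → Convex ℝ K → Bornology.IsBounded K → 0 < volume K →
        ContDiffOn ℝ 1 u K →
        IntegrableOn u K volume →
        IntegrableOn (fun x => (u x) ^ 2) K volume →
        IntegrableOn (fun x => ‖fderiv ℝ u x‖ ^ 2) K volume →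
        (∫ x in K, u x) = 0 →
        Real.sqrt (∫ x in K, (u x) ^ 2) ≤
          C * (Metric.diam K) ^ ((1 : ℝ) + d / 2) / Real.sqrt ((volume K).toReal) *
            Real.sqrt (∫ x in K, ‖fderiv ℝ u x‖ ^ 2) := by
  set V := (volume (Metric.closedBall (0 : EuclideanSpace ℝ (Fin d)) 1)).toReal with hVdef
  have hVnn : 0 ≤ V := ENNReal.toReal_nonneg
  refine ⟨Real.sqrt (2 ^ (d + 1)) * (Real.sqrt V + 1), ?_, ?_⟩
  · have h1 : (0:ℝ) < Real.sqrt (2 ^ (d + 1)) := Real.sqrt_pos.2 (by positivity)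
    have h2 : (0:ℝ) < Real.sqrt V + 1 := by positivity
    exact mul_pos h1 h2
  intro K u hK hconv hKb hKpos hu huint hu2int hg2int hmean
  set C := Real.sqrt (2 ^ (d + 1)) * (Real.sqrt V + 1) with hCdef
  set D := Metric.diam K with hDdef
  have hD0 : 0 ≤ D := Metric.diam_nonneg
  have hgn : (0:ℝ) ≤ ∫ x in K, ‖fderiv ℝ u x‖ ^ 2 := integral_nonneg fun x => sq_nonneg _
  have hmain := main_bound hK hconv hKb hKpos hu huint hu2int hg2int hmean
  have hL : Real.sqrt (∫ x in K, (u x) ^ 2)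
      ≤ Real.sqrt (2 ^ (d + 1)) * D * Real.sqrt (∫ x in K, ‖fderiv ℝ u x‖ ^ 2) := by
    calc Real.sqrt (∫ x in K, (u x) ^ 2)
        ≤ Real.sqrt (2 ^ (d + 1) * D ^ 2 * ∫ x in K, ‖fderiv ℝ u x‖ ^ 2) :=
          Real.sqrt_le_sqrt hmain
      _ = Real.sqrt (2 ^ (d + 1)) * D * Real.sqrt (∫ x in K, ‖fderiv ℝ u x‖ ^ 2) := by
          rw [Real.sqrt_mul (by positivity), Real.sqrt_mul (by positivity), Real.sqrt_sq hD0]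
  obtain ⟨x₀, hx₀⟩ : K.Nonempty := nonempty_of_measure_ne_zero hKpos.ne'
  have hsub : K ⊆ Metric.closedBall x₀ D := fun z hz =>
    Metric.mem_closedBall.2 (Metric.dist_le_diam_of_mem hKb hz hx₀)
  have hvol : volume K ≤ ENNReal.ofReal (D ^ d) *
      volume (Metric.closedBall (0 : EuclideanSpace ℝ (Fin d)) 1) := by
    calc volume K ≤ volume (Metric.closedBall x₀ D) := measure_mono hsub
      _ = ENNReal.ofReal (D ^ d) * volume (Metric.closedBall (0 : EuclideanSpace ℝ (Fin d)) 1) := by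
          rw [Measure.addHaar_closedBall' volume x₀ hD0, finrank_euclideanSpace_fin]
  have hm : (volume K).toReal ≤ D ^ d * V := by
    have hfin : ENNReal.ofReal (D ^ d) *
        volume (Metric.closedBall (0 : EuclideanSpace ℝ (Fin d)) 1) ≠ ⊤ :=
      ENNReal.mul_ne_top ENNReal.ofReal_ne_top Metric.isBounded_closedBall.measure_lt_top.ne
    calc (volume K).toReal
        ≤ (ENNReal.ofReal (D ^ d) *
            volume (Metric.closedBall (0 : EuclideanSpace ℝ (Fin d)) 1)).toReal :=
          ENNReal.toReal_mono hfin hvol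
      _ = D ^ d * V := by rw [ENNReal.toReal_mul, ENNReal.toReal_ofReal (by positivity)]
  have hmpos : 0 < (volume K).toReal := ENNReal.toReal_pos hKpos.ne' hKb.measure_lt_top.ne
  have hsm : Real.sqrt (volume K).toReal ≤ Real.sqrt (D ^ d) * Real.sqrt V := by
    rw [← Real.sqrt_mul (by positivity)]
    exact Real.sqrt_le_sqrt hm
  have hpow : D ^ ((1:ℝ) + d / 2) = D * Real.sqrt (D ^ d) := by
    rcases eq_or_lt_of_le hD0 with h0 | hpos
    · rw [← h0, Real.zero_rpow (by positivity)]
      rw [zero_mul]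
    · rw [Real.rpow_add hpos, Real.rpow_one]
      congr 1
      rw [Real.sqrt_eq_rpow, ← Real.rpow_natCast D d, ← Real.rpow_mul hD0]
      congr 1
      ring
  have hkey : Real.sqrt (2 ^ (d + 1)) * D
      ≤ C * D ^ ((1:ℝ) + d / 2) / Real.sqrt (volume K).toReal := by
    rw [le_div_iff₀ (Real.sqrt_pos.2 hmpos)]
    have hb : (0:ℝ) ≤ D * Real.sqrt (D ^ d) := by positivity
    calc Real.sqrt (2 ^ (d + 1)) * D * Real.sqrt (volume K).toReal
        ≤ Real.sqrt (2 ^ (d + 1)) * D * (Real.sqrt (D ^ d) * Real.sqrt V) := by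
          apply mul_le_mul_of_nonneg_left hsm (by positivity)
      _ = Real.sqrt (2 ^ (d + 1)) * (D * Real.sqrt (D ^ d)) * Real.sqrt V := by ring
      _ ≤ Real.sqrt (2 ^ (d + 1)) * (D * Real.sqrt (D ^ d)) * (Real.sqrt V + 1) := by
          apply mul_le_mul_of_nonneg_left (by linarith) (by positivity)
      _ = C * (D * Real.sqrt (D ^ d)) := by rw [hCdef]; ring
      _ = C * D ^ ((1:ℝ) + d / 2) := by rw [hpow]
  calc Real.sqrt (∫ x in K, (u x) ^ 2)
      ≤ Real.sqrt (2 ^ (d + 1)) * D * Real.sqrt (∫ x in K, ‖fderiv ℝ u x‖ ^ 2) := hL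
    _ ≤ C * D ^ ((1:ℝ) + d / 2) / Real.sqrt ((volume K).toReal) *
        Real.sqrt (∫ x in K, ‖fderiv ℝ u x‖ ^ 2) :=
      mul_le_mul_of_nonneg_right hkey (Real.sqrt_nonneg _)
end

section
/- Let a < b and let u : [a,b] → ℝ be continuously differentiable with ∫_a^b u = 0. Then ‖u‖_{L²(a,b)} ≤ (b - a) ‖u'‖_{L²(a,b)}. -/
open Set MeasureTheory intervalIntegral

theorem poincare_wirtinger_1d (a b : ℝ) (hab : a < b) (u : ℝ → ℝ)
    (hu : ContDiffOn ℝ 1 u (Set.Icc a b))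
    (hmean : (∫ x in a..b, u x) = 0) :
    Real.sqrt (∫ x in a..b, (u x) ^ 2) ≤
      (b - a) * Real.sqrt (∫ x in a..b, (derivWithin u (Set.Icc a b) x) ^ 2) := by
  set g : ℝ → ℝ := derivWithin u (Set.Icc a b) with hgdef
  have hab' : a ≤ b := hab.le
  have huIcc : uIcc a b = Icc a b := uIcc_of_le hab'
  have hucont : ContinuousOn u (Icc a b) := hu.continuousOn
  have hgcont : ContinuousOn g (Icc a b) :=
    hu.continuousOn_derivWithin (uniqueDiffOn_Icc hab) le_rfl
  -- there is a zero of u in [a,b]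
  have hc : ∃ c ∈ Icc a b, u c = 0 := by
    by_contra h
    push_neg at h
    have himg : u '' Icc a b ⊆ Iio 0 ∪ Ioi 0 := by
      rintro y ⟨x, hx, rfl⟩
      rcases lt_trichotomy (u x) 0 with h1 | h1 | h1
      · exact Or.inl h1
      · exact absurd h1 (h x hx)
      · exact Or.inr h1
    have hpre : IsPreconnected (u '' Icc a b) := isPreconnected_Icc.image u hucont
    have hint : IntervalIntegrable u volume a b :=
      (hucont.mono (by rw [huIcc])).intervalIntegrable
    have hdisj : Disjoint (Iio (0:ℝ)) (Ioi 0) := by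
      rw [Set.disjoint_left]; intro x h1 h2
      exact absurd (h1.trans h2) (lt_irrefl x)
    rcases hpre.subset_or_subset isOpen_Iio isOpen_Ioi hdisj himg with hs | hs
    · have hpos : 0 < ∫ x in a..b, (fun t => -u t) x :=
        intervalIntegral_pos_of_pos_on hint.neg
          (fun x hx => by
            have := hs ⟨x, Ioo_subset_Icc_self hx, rfl⟩
            simpa using this) hab
      rw [intervalIntegral.integral_neg, hmean] at hpos
      simp at hpos
    · have hpos : 0 < ∫ x in a..b, u x :=
        intervalIntegral_pos_of_pos_on hint
          (fun x hx => hs ⟨x, Ioo_subset_Icc_self hx, rfl⟩) hab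
      rw [hmean] at hpos
      exact lt_irrefl 0 hpos
  obtain ⟨c, hcmem, hc0⟩ := hc
  -- FTC: u x = ∫ t in c..x, g t
  have key : ∀ x ∈ Icc a b, u x = ∫ t in c..x, g t := by
    intro x hx
    have hsub : uIcc c x ⊆ Icc a b := uIcc_subset_Icc hcmem hx
    have hftc : ∫ t in c..x, g t = u x - u c := by
      apply integral_eq_sub_of_hasDeriv_right (hucont.mono hsub)
      · intro t ht
        have ht' : t ∈ Ioo a b := by
          constructor
          · exact lt_of_le_of_lt (le_min hcmem.1 hx.1) ht.1
          · exact lt_of_lt_of_le ht.2 (max_le hcmem.2 hx.2)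
        have hd : HasDerivWithinAt u (g t) (Icc a b) t :=
          (hu.differentiableOn one_ne_zero t (Ioo_subset_Icc_self ht')).hasDerivWithinAt
        exact (hd.hasDerivAt (Icc_mem_nhds ht'.1 ht'.2)).hasDerivWithinAt
      · exact (hgcont.mono hsub).intervalIntegrable
    rw [hftc, hc0, sub_zero]
  set J : ℝ := ∫ t in a..b, |g t| with hJdef
  set A : ℝ := ∫ t in a..b, (g t) ^ 2 with hAdef
  have habscont : ContinuousOn (fun t => |g t|) (Icc a b) := hgcont.abs
  have hsqcont : ContinuousOn (fun t => (g t) ^ 2) (Icc a b) := hgcont.pow 2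
  have habsint : IntervalIntegrable (fun t => |g t|) volume a b :=
    (habscont.mono (by rw [huIcc])).intervalIntegrable
  have hsqint : IntervalIntegrable (fun t => (g t) ^ 2) volume a b :=
    (hsqcont.mono (by rw [huIcc])).intervalIntegrable
  have hAnn : 0 ≤ A :=
    intervalIntegral.integral_nonneg hab' fun t _ => sq_nonneg _
  have hJnn : 0 ≤ J :=
    intervalIntegral.integral_nonneg hab' fun t _ => abs_nonneg _
  -- Cauchy–Schwarz via the epsilon trick
  have hkey : ∀ ε : ℝ, 0 < ε → J ≤ (ε * A + (b - a) / ε) / 2 := by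
    intro ε hε
    have hrint : IntervalIntegrable (fun t => (ε * (g t) ^ 2 + 1 / ε) / 2) volume a b :=
      (((hsqint.const_mul ε).add (intervalIntegrable_const)).div_const 2)
    have hmono : J ≤ ∫ t in a..b, (ε * (g t) ^ 2 + 1 / ε) / 2 := by
      apply intervalIntegral.integral_mono_on hab' habsint hrint
      intro t _
      have hexp : (ε * |g t| - 1) ^ 2 / ε = ε * |g t| ^ 2 + 1 / ε - 2 * |g t| := by
        field_simp
        ring
      have hnn := div_nonneg (sq_nonneg (ε * |g t| - 1)) hε.le
      rw [hexp, sq_abs] at hnn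
      linarith
    have hcalc : ∫ t in a..b, (ε * (g t) ^ 2 + 1 / ε) / 2 = (ε * A + (b - a) / ε) / 2 := by
      rw [intervalIntegral.integral_div,
        intervalIntegral.integral_add (hsqint.const_mul ε) intervalIntegrable_const,
        intervalIntegral.integral_const_mul, intervalIntegral.integral_const,
        smul_eq_mul]
      ring
    linarith [hmono, hcalc ▸ hmono]
  have hCS : J ^ 2 ≤ (b - a) * A := by
    rcases eq_or_lt_of_le hAnn with hA | hA
    · -- A = 0
      have hJ0 : J ≤ 0 := by
        by_contra hJ
        push_neg at hJ
        have hεpos : 0 < (b - a) / J := div_pos (by linarith) hJ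
        have h1 := hkey ((b - a) / J) hεpos
        rw [← hA, mul_zero, zero_add] at h1
        have h2 : (b - a) / ((b - a) / J) = J := by
          rw [div_div_eq_mul_div, mul_comm, mul_div_assoc,
            div_self (by linarith : b - a ≠ 0), mul_one]
        rw [h2] at h1
        linarith
      have : J = 0 := le_antisymm hJ0 hJnn
      rw [this, ← hA]
      norm_num
    · -- A > 0
      set s : ℝ := Real.sqrt ((b - a) * A) with hsdef
      have hsA : 0 < (b - a) * A := mul_pos (by linarith) hA
      have hspos : 0 < s := Real.sqrt_pos.2 hsA
      have hs2 : s ^ 2 = (b - a) * A := Real.sq_sqrt hsA.le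
      have hεpos : 0 < s / A := div_pos hspos hA
      have h1 := hkey (s / A) hεpos
      have h2 : s / A * A = s := by field_simp
      have h3 : (b - a) / (s / A) = s := by
        rw [div_div_eq_mul_div, div_eq_iff hspos.ne', ← hs2]
        ring
      rw [h2, h3] at h1
      have hJs : J ≤ s := by linarith
      calc J ^ 2 ≤ s ^ 2 := pow_le_pow_left₀ hJnn hJs 2
        _ = (b - a) * A := hs2
  -- pointwise bound
  have hpt : ∀ x ∈ Icc a b, (u x) ^ 2 ≤ (b - a) * A := by
    intro x hx
    have h1 : |u x| ≤ J := by
      rw [key x hx]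
      rcases le_total c x with h | h
      · calc |∫ t in c..x, g t| ≤ ∫ t in c..x, |g t| := by
              simpa [Real.norm_eq_abs] using
                intervalIntegral.norm_integral_le_integral_norm (f := g) (μ := volume) h
          _ ≤ J := intervalIntegral.integral_mono_interval hcmem.1 h hx.2
              (Filter.Eventually.of_forall fun t => abs_nonneg _) habsint
      · have hsymm : |∫ t in c..x, g t| = |∫ t in x..c, g t| := by
          rw [intervalIntegral.integral_symm, abs_neg]
        rw [hsymm]
        calc |∫ t in x..c, g t| ≤ ∫ t in x..c, |g t| := by
              simpa [Real.norm_eq_abs] using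
                intervalIntegral.norm_integral_le_integral_norm (f := g) (μ := volume) h
          _ ≤ J := intervalIntegral.integral_mono_interval hx.1 h hcmem.2
              (Filter.Eventually.of_forall fun t => abs_nonneg _) habsint
    calc (u x) ^ 2 = |u x| ^ 2 := (sq_abs _).symm
      _ ≤ J ^ 2 := pow_le_pow_left₀ (abs_nonneg _) h1 2
      _ ≤ (b - a) * A := hCS
  -- integrate the pointwise bound
  have husqint : IntervalIntegrable (fun x => (u x) ^ 2) volume a b :=
    ((hucont.pow 2).mono (by rw [huIcc])).intervalIntegrable
  have hInt : (∫ x in a..b, (u x) ^ 2) ≤ (b - a) ^ 2 * A := by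
    have := intervalIntegral.integral_mono_on hab' husqint
      (_root_.intervalIntegrable_const (c := (b - a) * A)) hpt
    rwa [intervalIntegral.integral_const, smul_eq_mul, ← mul_assoc, ← sq] at this
  calc Real.sqrt (∫ x in a..b, (u x) ^ 2)
      ≤ Real.sqrt ((b - a) ^ 2 * A) := Real.sqrt_le_sqrt hInt
    _ = (b - a) * Real.sqrt A := by
        rw [Real.sqrt_mul (sq_nonneg _), Real.sqrt_sq (by linarith : (0:ℝ) ≤ b - a)]
end

section
/- Let K = (0,h) ⊂ ℝ and let v be a polynomial of degree at most r on K. Then ‖v'‖_{L²(K)} ≤ C r² / h · ‖v‖_{L²(K)} for a constant C independent of r and h. -/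
open Polynomial Finset intervalIntegral MeasureTheory

noncomputable section
namespace HpInv

/-- inner product on L²(0,1) of polynomial evaluations -/
def ip (p q : Polynomial ℝ) : ℝ := ∫ x in (0:ℝ)..1, p.eval x * q.eval x

lemma intg (p : Polynomial ℝ) (a b : ℝ) :
    IntervalIntegrable (fun x => p.eval x) volume a b :=
  (p.continuous_aeval).intervalIntegrable a b

lemma intg2 (p q : Polynomial ℝ) (a b : ℝ) :
    IntervalIntegrable (fun x => p.eval x * q.eval x) volume a b :=
  ((p.continuous_aeval).mul (q.continuous_aeval)).intervalIntegrable a b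

lemma ip_comm (p q : Polynomial ℝ) : ip p q = ip q p := by
  unfold ip; congr 1; ext x; ring

lemma ip_C_mul_left (c : ℝ) (p q : Polynomial ℝ) : ip (C c * p) q = c * ip p q := by
  unfold ip
  rw [← intervalIntegral.integral_const_mul]
  congr 1; ext x; simp [mul_assoc]

lemma ip_sum_left {s : Finset ℕ} (f : ℕ → Polynomial ℝ) (g : Polynomial ℝ) :
    ip (∑ i ∈ s, f i) g = ∑ i ∈ s, ip (f i) g := by
  unfold ip
  rw [← intervalIntegral.integral_finset_sum (fun i _ => intg2 (f i) g 0 1)]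
  congr 1; ext x; simp [eval_finset_sum, Finset.sum_mul]

lemma ip_self_nonneg (p : Polynomial ℝ) : 0 ≤ ip p p := by
  unfold ip
  apply intervalIntegral.integral_nonneg (by norm_num)
  intro x _; exact mul_self_nonneg _

/-- integration by parts for polynomials on [0,1] -/
lemma ip_parts (p q : Polynomial ℝ) :
    ip (derivative p) q =
      p.eval 1 * q.eval 1 - p.eval 0 * q.eval 0 - ip p (derivative q) := by
  unfold ip
  have H := intervalIntegral.integral_mul_deriv_eq_deriv_mul
    (u := fun x => q.eval x) (v := fun x => p.eval x)
    (u' := fun x => (derivative q).eval x) (v' := fun x => (derivative p).eval x)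
    (a := 0) (b := 1)
    (fun x _ => q.hasDerivAt x) (fun x _ => p.hasDerivAt x)
    (intg _ 0 1) (intg _ 0 1)
  have h1 : (∫ x in (0:ℝ)..1, (derivative p).eval x * q.eval x)
      = ∫ x in (0:ℝ)..1, q.eval x * (derivative p).eval x := by
    congr 1; ext x; ring
  have h2 : (∫ x in (0:ℝ)..1, p.eval x * (derivative q).eval x)
      = ∫ x in (0:ℝ)..1, (derivative q).eval x * p.eval x := by
    congr 1; ext x; ring
  rw [h1, H, h2]; ring


lemma beta_nat (b a : ℕ) :
    ∫ x in (0:ℝ)..1, x ^ a * (1 - x) ^ b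
      = (a.factorial * b.factorial : ℝ) / (a + b + 1).factorial := by
  induction b generalizing a with
  | zero =>
    simp only [pow_zero, mul_one, Nat.factorial_zero, Nat.cast_one, Nat.add_zero,
      integral_pow]
    rw [Nat.factorial_succ]
    push_cast
    have : (a:ℝ) + 1 ≠ 0 := by positivity
    have : (a.factorial : ℝ) ≠ 0 := Nat.cast_ne_zero.mpr (Nat.factorial_ne_zero _)
    field_simp
    simp
  | succ b IH =>
    have key : (a+1 : ℝ) * ∫ x in (0:ℝ)..1, x ^ a * (1 - x) ^ (b+1)
        = (b+1 : ℝ) * ∫ x in (0:ℝ)..1, x ^ (a+1) * (1 - x) ^ b := by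
      have hu : ∀ x ∈ Set.uIcc (0:ℝ) 1, HasDerivAt (fun x : ℝ => (1 - x) ^ (b+1))
          (-((b+1 : ℝ) * (1 - x) ^ b)) x := by
        intro x _
        have h1 : HasDerivAt (fun x : ℝ => 1 - x) (-1) x := by
          simpa using ((hasDerivAt_id x).const_sub 1)
        have := h1.fun_pow (b+1)
        refine this.congr_deriv ?_
        rw [Nat.add_sub_cancel]; push_cast; ring
      have hv : ∀ x ∈ Set.uIcc (0:ℝ) 1, HasDerivAt (fun x : ℝ => x ^ (a+1))
          ((a+1 : ℝ) * x ^ a) x := by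
        intro x _
        simpa using (hasDerivAt_pow (a+1) x)
      have hcu : IntervalIntegrable (fun x : ℝ => -((b+1 : ℝ) * (1 - x) ^ b)) volume 0 1 :=
        (Continuous.intervalIntegrable (by continuity) 0 1)
      have hcv : IntervalIntegrable (fun x : ℝ => (a+1 : ℝ) * x ^ a) volume 0 1 :=
        (Continuous.intervalIntegrable (by continuity) 0 1)
      have H := intervalIntegral.integral_mul_deriv_eq_deriv_mul hu hv hcu hcv
      calc (a+1 : ℝ) * ∫ x in (0:ℝ)..1, x ^ a * (1 - x) ^ (b+1)
          = ∫ x in (0:ℝ)..1, (1-x)^(b+1) * ((a+1:ℝ) * x^a) := by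
            rw [← intervalIntegral.integral_const_mul]; congr 1; ext x; ring
        _ = (1-(1:ℝ))^(b+1) * 1^(a+1) - (1-(0:ℝ))^(b+1) * 0^(a+1)
              - ∫ x in (0:ℝ)..1, -((b+1:ℝ)*(1-x)^b) * x^(a+1) := H
        _ = ∫ x in (0:ℝ)..1, -(-((b+1:ℝ)*(1-x)^b) * x^(a+1)) := by
            rw [intervalIntegral.integral_neg]; norm_num
        _ = ∫ x in (0:ℝ)..1, (b+1:ℝ) * (x^(a+1) * (1-x)^b) := by
            congr 1; ext x; ring
        _ = (b+1 : ℝ) * ∫ x in (0:ℝ)..1, x ^ (a+1) * (1 - x) ^ b := by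
            rw [intervalIntegral.integral_const_mul]
    have h1 : (a+1:ℝ) ≠ 0 := by positivity
    have IH' := IH (a+1)
    rw [IH'] at key
    have hb : (0:ℝ) < (b+1:ℝ) := by positivity
    have : (∫ x in (0:ℝ)..1, x ^ a * (1 - x) ^ (b+1))
        = (b+1 : ℝ) * (((a+1).factorial : ℝ) * (b.factorial : ℝ) / (((a+1) + b + 1).factorial : ℝ)) / (a+1:ℝ) := by
      rw [eq_div_iff h1]
      linarith [key]
    rw [this]
    have e1 : ((a+1).factorial : ℝ) = (a+1) * a.factorial := by
      rw [Nat.factorial_succ]; push_cast; ring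
    have e2 : ((b+1).factorial : ℝ) = (b+1) * b.factorial := by
      rw [Nat.factorial_succ]; push_cast; ring
    have e3 : ((a+1) + b + 1) = (a + (b+1) + 1) := by ring
    rw [e1, e2, e3]
    have h4 : ((a + (b+1) + 1).factorial : ℝ) ≠ 0 := Nat.cast_ne_zero.mpr (Nat.factorial_ne_zero _)
    field_simp

lemma ip_zero_right (p : Polynomial ℝ) : ip p 0 = 0 := by simp [ip]

/-- weight polynomial -/
def w (n : ℕ) : Polynomial ℝ := X ^ n * (X - C 1) ^ n

/-- (unnormalized) shifted Legendre polynomial -/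
def q (n : ℕ) : Polynomial ℝ := derivative^[n] (w n)

lemma monic_w (n : ℕ) : (w n).Monic :=
  (monic_X_pow n).mul ((monic_X_sub_C 1).pow n)

lemma natDegree_w (n : ℕ) : (w n).natDegree = 2 * n := by
  rw [w, natDegree_mul (pow_ne_zero _ X_ne_zero) (pow_ne_zero _ (X_sub_C_ne_zero 1)),
    natDegree_X_pow, natDegree_pow, natDegree_X_sub_C]
  ring

lemma deriv_w_factor (n : ℕ) : ∀ k, k ≤ n →
    ∃ g : Polynomial ℝ, derivative^[k] (w n) = X ^ (n-k) * (X - C 1) ^ (n-k) * g := by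
  intro k
  induction k with
  | zero => exact fun _ => ⟨1, by simp [w]⟩
  | succ k IH =>
    intro hk
    obtain ⟨g, hg⟩ := IH (Nat.le_of_succ_le hk)
    set m := n - (k+1) with hm
    have hnk : n - k = m + 1 := by omega
    refine ⟨(C ((m:ℝ)+1)) * ((X - C 1) * g + X * g) + X * (X - C 1) * derivative g, ?_⟩
    rw [Function.iterate_succ_apply', hg, hnk]
    simp only [derivative_mul, derivative_pow, derivative_X, derivative_sub,
      derivative_one, derivative_C, map_add, map_natCast, C_1]
    push_cast
    ring

lemma deriv_w_eval0 (n k : ℕ) (hk : k < n) : (derivative^[k] (w n)).eval 0 = 0 := by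
  obtain ⟨g, hg⟩ := deriv_w_factor n k hk.le
  rw [hg]
  have h1 : n - k ≠ 0 := by omega
  simp [zero_pow h1]

lemma deriv_w_eval1 (n k : ℕ) (hk : k < n) : (derivative^[k] (w n)).eval 1 = 0 := by
  obtain ⟨g, hg⟩ := deriv_w_factor n k hk.le
  rw [hg]
  have h1 : n - k ≠ 0 := by omega
  simp [zero_pow h1]

lemma rep (n : ℕ) (f : Polynomial ℝ) : ∀ k, k ≤ n →
    ip (q n) f = (-1:ℝ)^k * ip (derivative^[n-k] (w n)) (derivative^[k] f) := by
  intro k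
  induction k with
  | zero => simp [q]
  | succ k IH =>
    intro hk
    rw [IH (Nat.le_of_succ_le hk)]
    have hs : n - k = (n - (k+1)) + 1 := by omega
    rw [hs, Function.iterate_succ_apply', ip_parts,
      deriv_w_eval0 n _ (by omega), deriv_w_eval1 n _ (by omega),
      ← Function.iterate_succ_apply' derivative k f]
    ring

lemma orth (n : ℕ) (f : Polynomial ℝ) (hf : f.natDegree < n) : ip (q n) f = 0 := by
  rw [rep n f n le_rfl, iterate_derivative_eq_zero hf, ip_zero_right, mul_zero]

lemma w_split (n : ℕ) : ∃ s : Polynomial ℝ, w n = X^(2*n) + s ∧ s.natDegree ≤ 2*n - 1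
    ∧ (n = 0 → s = 0) := by
  refine ⟨w n - X^(2*n), by ring, ?_, ?_⟩
  · rw [natDegree_le_iff_coeff_eq_zero]
    intro N hN
    rcases eq_or_lt_of_le (show 2*n ≤ N by omega) with h | h
    · rw [coeff_sub, ← h, coeff_X_pow, if_pos rfl, ← natDegree_w n,
        (monic_w n).coeff_natDegree, sub_self]
    · rw [coeff_sub, coeff_eq_zero_of_natDegree_lt (by rw [natDegree_w]; exact h),
        coeff_X_pow, if_neg (by omega), sub_zero]
  · intro h; subst h; simp [w]

lemma iterate_derivative_add' (k : ℕ) : ∀ p q : Polynomial ℝ,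
    derivative^[k] (p + q) = derivative^[k] p + derivative^[k] q := by
  induction k with
  | zero => intro p q; rfl
  | succ k IH =>
    intro p q
    rw [Function.iterate_succ_apply, Function.iterate_succ_apply,
      Function.iterate_succ_apply, derivative_add, IH]

lemma iter_deriv_w (n k : ℕ) (hk : k ≤ 2*n) :
    ∃ s : Polynomial ℝ, derivative^[k] (w n) = (((2*n).descFactorial k : ℝ)) • X^(2*n-k) + s
      ∧ s.natDegree ≤ 2*n - 1 - k ∧ (n = 0 → s = 0) := by
  obtain ⟨s, hw, hs, hs0⟩ := w_split n
  refine ⟨derivative^[k] s, ?_, ?_, fun h => by rw [hs0 h]; simp⟩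
  · rw [hw, iterate_derivative_add', iterate_derivative_X_pow_eq_smul]
  · exact le_trans (natDegree_iterate_derivative _ _) (by omega)

lemma DnDn (n : ℕ) : derivative^[2*n] (w n) = C ((2*n).factorial : ℝ) := by
  rcases Nat.eq_zero_or_pos n with h | h
  · subst h; simp [w]
  · obtain ⟨s, hw, hs, _⟩ := w_split n
    rw [hw, iterate_derivative_add', iterate_derivative_X_pow_eq_smul,
      iterate_derivative_eq_zero (by omega), add_zero, Nat.sub_self, pow_zero,
      Nat.descFactorial_self]
    rw [smul_eq_C_mul, mul_one]

lemma norm_q (n : ℕ) : ip (q n) (q n) = ((n.factorial : ℝ))^2 / (2*(n:ℝ)+1) := by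
  have h1 := rep n (q n) n le_rfl
  rw [Nat.sub_self, Function.iterate_zero_apply] at h1
  have h2 : derivative^[n] (q n) = C ((2*n).factorial : ℝ) := by
    rw [q, ← Function.iterate_add_apply, ← two_mul, DnDn]
  rw [h2] at h1
  have h3 : (-1:ℝ)^n * ip (w n) (C ((2*n).factorial : ℝ))
      = ((2*n).factorial : ℝ) * ∫ x in (0:ℝ)..1, x^n * (1-x)^n := by
    rw [ip, ← intervalIntegral.integral_const_mul, ← intervalIntegral.integral_const_mul]
    congr 1; ext x
    simp only [eval_mul, eval_pow, eval_sub, eval_X, eval_C, eval_one, w]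
    rw [show ((1:ℝ) - x)^n = (-1:ℝ)^n * (x-1)^n from by rw [← neg_pow]; congr 1; ring]
    ring
  rw [h1, h3, beta_nat n n]
  have h4 : ((n + n + 1).factorial : ℝ) = (2*(n:ℝ)+1) * ((2*n).factorial : ℝ) := by
    rw [show n + n + 1 = (2*n) + 1 by ring, Nat.factorial_succ]; push_cast; ring
  rw [h4]
  have h5 : ((2*n).factorial : ℝ) ≠ 0 := Nat.cast_ne_zero.mpr (Nat.factorial_ne_zero _)
  have h6 : (2*(n:ℝ)+1) ≠ 0 := by positivity
  field_simp

lemma q_eval1 (n : ℕ) : (q n).eval 1 = n.factorial := by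
  rw [q, w, iterate_derivative_mul, eval_finset_sum, Finset.sum_eq_single n]
  · rw [Nat.sub_self, Function.iterate_zero_apply, iterate_derivative_X_sub_pow_self]
    simp
  · intro k hk hkn
    have hk' : n - k ≠ 0 := by simp [Finset.mem_range] at hk; omega
    rw [iterate_derivative_X_sub_pow]
    simp [zero_pow hk']
  · intro hn; exact absurd (Finset.self_mem_range_succ n) hn

lemma q_eval0 (n : ℕ) : (q n).eval 0 = (-1:ℝ)^n * n.factorial := by
  rw [q, w, iterate_derivative_mul, eval_finset_sum, Finset.sum_eq_single 0]
  · rw [Nat.sub_zero, iterate_derivative_X_pow_eq_smul, Nat.descFactorial_self, Nat.sub_self]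
    simp; ring
  · intro k hk hkn
    have hk2 : k ≤ n := by simp [Finset.mem_range] at hk; omega
    have he : n - (n - k) = k := by omega
    rw [iterate_derivative_X_pow_eq_smul, he]
    simp [zero_pow hkn]
  · intro hn; exact absurd (Finset.mem_range.mpr (by omega)) hn

lemma dq (n : ℕ) : derivative (q n) = derivative^[n+1] (w n) := by
  rw [q]
  exact (Function.iterate_succ_apply' derivative n (w n)).symm

lemma dq_eval1 (n : ℕ) : (derivative (q n)).eval 1 = (n:ℝ)*(n+1)*n.factorial := by
  rw [dq, w, iterate_derivative_mul, eval_finset_sum, Finset.sum_eq_single n]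
  · rw [show n+1-n = 1 by omega, iterate_derivative_X_sub_pow_self,
      iterate_derivative_X_pow_eq_smul]
    simp
    ring
  · intro k hk hkn
    simp only [Finset.mem_range] at hk
    rcases Nat.lt_or_ge k n with h | h
    · have hk' : n - k ≠ 0 := by omega
      rw [iterate_derivative_X_sub_pow]
      simp [zero_pow hk']
    · have hk' : k = n+1 := by omega
      subst hk'
      rw [iterate_derivative_X_sub_pow]
      simp [show n.descFactorial (n+1) = 0 from Nat.descFactorial_eq_zero_iff_lt.mpr (by omega)]
  · intro hn; exact absurd (Finset.mem_range.mpr (by omega)) hn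

lemma dq_eval0 (n : ℕ) :
    (derivative (q n)).eval 0 = (-1:ℝ)^(n-1) * ((n:ℝ)*(n+1)*n.factorial) := by
  rw [dq, w, iterate_derivative_mul, eval_finset_sum, Finset.sum_eq_single 1]
  · rw [show n+1-1 = n by omega, iterate_derivative_X_pow_eq_smul,
      iterate_derivative_X_sub_pow, Nat.descFactorial_self, Nat.sub_self]
    rcases Nat.eq_zero_or_pos n with h | h
    · subst h; simp
    · simp
      ring
  · intro k hk hkn
    simp only [Finset.mem_range] at hk
    rcases Nat.eq_zero_or_pos k with h | h
    · subst h
      rw [Nat.sub_zero, iterate_derivative_X_pow_eq_smul,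
        show n.descFactorial (n+1) = 0 from Nat.descFactorial_eq_zero_iff_lt.mpr (by omega)]
      simp
    · have he : n - (n + 1 - k) = k - 1 := by omega
      have hk1 : k - 1 ≠ 0 := by omega
      rw [iterate_derivative_X_pow_eq_smul, he]
      simp [zero_pow hk1]
  · intro hn; exact absurd (Finset.mem_range.mpr (by omega)) hn

lemma natDegree_q_le (n : ℕ) : (q n).natDegree ≤ n := by
  rw [q]
  have h := natDegree_iterate_derivative (w n) n
  rw [natDegree_w] at h
  omega

lemma gram_zero (n m : ℕ) (h : m ≠ n) : ip (q n) (q m) = 0 := by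
  rcases Nat.lt_or_ge m n with hlt | hge
  · exact orth n (q m) (lt_of_le_of_lt (natDegree_q_le m) hlt)
  · have : n < m := by omega
    rw [ip_comm]
    exact orth m (q n) (lt_of_le_of_lt (natDegree_q_le n) this)

lemma q_zero : q 0 = 1 := by simp [q, w]

lemma gram_deriv (n m : ℕ) (hm : m ≤ n) (hn : 1 ≤ n) :
    ip (derivative (q n)) (derivative (q m))
      = (q n).eval 1 * (derivative (q m)).eval 1
        - (q n).eval 0 * (derivative (q m)).eval 0 := by
  rw [ip_parts]
  have hdeg : (derivative (derivative (q m))).natDegree < n := by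
    have h1 := natDegree_derivative_le (q m)
    have h2 := natDegree_derivative_le (derivative (q m))
    have h3 := natDegree_q_le m
    omega
  rw [orth n _ hdeg, sub_zero]

lemma gram_deriv_bound (n m : ℕ) (hm : m ≤ n) :
    |ip (derivative (q n)) (derivative (q m))|
      ≤ 2 * (n.factorial : ℝ) * m.factorial * ((m:ℝ)*(m+1)) := by
  have tri : ∀ x y : ℝ, |x - y| ≤ |x| + |y| := fun x y => by
    simpa [sub_eq_add_neg] using abs_add_le x (-y)
  rcases Nat.eq_zero_or_pos n with hn | hn
  · have hm0 : m = 0 := by omega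
    subst hm0; subst hn
    simp [q_zero, ip]
  · rw [gram_deriv n m hm hn, q_eval1, q_eval0, dq_eval1, dq_eval0]
    have hA : (0:ℝ) ≤ (n.factorial : ℝ) := by positivity
    have hB : (0:ℝ) ≤ (m:ℝ)*(m+1)*m.factorial := by positivity
    have hx : |(n.factorial:ℝ) * ((m:ℝ)*(m+1)*m.factorial)|
        = (n.factorial:ℝ) * ((m:ℝ)*(m+1)*m.factorial) := abs_of_nonneg (by positivity)
    have hy : |((-1:ℝ)^n * n.factorial) * ((-1:ℝ)^(m-1) * ((m:ℝ)*(m+1)*m.factorial))|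
        = (n.factorial:ℝ) * ((m:ℝ)*(m+1)*m.factorial) := by
      rw [abs_mul, abs_mul, abs_mul, abs_pow, abs_pow, abs_neg, abs_one, one_pow, one_pow,
        one_mul, one_mul, abs_of_nonneg hA, abs_of_nonneg hB]
    calc |(n.factorial:ℝ) * ((m:ℝ)*(m+1)*m.factorial)
          - ((-1:ℝ)^n * n.factorial) * ((-1:ℝ)^(m-1) * ((m:ℝ)*(m+1)*m.factorial))|
        ≤ |(n.factorial:ℝ) * ((m:ℝ)*(m+1)*m.factorial)|
          + |((-1:ℝ)^n * n.factorial) * ((-1:ℝ)^(m-1) * ((m:ℝ)*(m+1)*m.factorial))| := tri _ _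
      _ = 2 * (n.factorial : ℝ) * m.factorial * ((m:ℝ)*(m+1)) := by rw [hx, hy]; ring

lemma coeff_q (n : ℕ) : (q n).coeff n = ((2*n).descFactorial n : ℝ) := by
  rcases Nat.eq_zero_or_pos n with h | h
  · subst h; simp [q_zero]
  · obtain ⟨s, hw, hs, _⟩ := iter_deriv_w n n (by omega)
    rw [q, hw, coeff_add, coeff_smul, coeff_X_pow, show 2*n - n = n by omega, if_pos rfl,
      coeff_eq_zero_of_natDegree_lt (by omega)]
    simp

lemma coeff_q_ne (n : ℕ) : ((2*n).descFactorial n : ℝ) ≠ 0 := by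
  have h : (2*n).descFactorial n ≠ 0 := by
    intro h0
    exact absurd (Nat.descFactorial_eq_zero_iff_lt.mp h0) (by omega)
  exact_mod_cast h

lemma expand : ∀ (r : ℕ) (p : Polynomial ℝ), p.natDegree ≤ r →
    ∃ a : ℕ → ℝ, p = ∑ n ∈ Finset.range (r+1), C (a n) * q n := by
  intro r
  induction r with
  | zero =>
    intro p hp
    refine ⟨fun _ => p.coeff 0, ?_⟩
    conv_lhs => rw [Polynomial.eq_C_of_natDegree_le_zero hp]
    simp [q_zero]
  | succ r IH =>
    intro p hp
    set lam : ℝ := ((2*(r+1)).descFactorial (r+1) : ℝ) with hlamdef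
    have hlam : lam ≠ 0 := coeff_q_ne (r+1)
    set c := p.coeff (r+1) / lam with hc
    have h1 : (p - C c * q (r+1)).natDegree ≤ r := by
      rw [natDegree_le_iff_coeff_eq_zero]
      intro m hm
      rcases eq_or_lt_of_le (show r+1 ≤ m by omega) with h | h
      · rw [coeff_sub, coeff_C_mul, ← h, coeff_q, ← hlamdef, hc, div_mul_cancel₀ _ hlam,
          sub_self]
      · rw [coeff_sub, coeff_eq_zero_of_natDegree_lt (lt_of_le_of_lt hp h),
          coeff_eq_zero_of_natDegree_lt, sub_zero]
        refine lt_of_le_of_lt (le_trans (natDegree_mul_le) ?_) h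
        simp [natDegree_q_le (r+1)]
    obtain ⟨a, ha⟩ := IH _ h1
    refine ⟨fun n => if n = r+1 then c else a n, ?_⟩
    calc p = (p - C c * q (r+1)) + C c * q (r+1) := by ring
      _ = (∑ n ∈ Finset.range (r+1), C (a n) * q n) + C c * q (r+1) := by rw [ha]
      _ = (∑ n ∈ Finset.range (r+1), C (if n = r+1 then c else a n) * q n)
            + C (if r+1 = r+1 then c else a (r+1)) * q (r+1) := by
          rw [if_pos rfl]
          congr 1
          exact Finset.sum_congr rfl fun n hn => by
            rw [if_neg (by simp only [Finset.mem_range] at hn; omega)]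
      _ = ∑ n ∈ Finset.range (r+1+1), C (if n = r+1 then c else a n) * q n :=
          (Finset.sum_range_succ _ _).symm

lemma ip_bilin (N : ℕ) (a b : ℕ → ℝ) (f g : ℕ → Polynomial ℝ) :
    ip (∑ n ∈ Finset.range N, C (a n) * f n) (∑ m ∈ Finset.range N, C (b m) * g m)
      = ∑ n ∈ Finset.range N, ∑ m ∈ Finset.range N, a n * b m * ip (f n) (g m) := by
  rw [ip_sum_left]
  refine Finset.sum_congr rfl fun n _ => ?_
  rw [ip_C_mul_left, ip_comm, ip_sum_left, Finset.mul_sum]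
  refine Finset.sum_congr rfl fun m _ => ?_
  rw [ip_C_mul_left, ip_comm]
  ring

lemma parseval (N : ℕ) (a : ℕ → ℝ) :
    ip (∑ n ∈ Finset.range N, C (a n) * q n) (∑ n ∈ Finset.range N, C (a n) * q n)
      = ∑ n ∈ Finset.range N, (a n)^2 * ((n.factorial:ℝ)^2/(2*(n:ℝ)+1)) := by
  rw [ip_bilin]
  refine Finset.sum_congr rfl fun n hn => ?_
  rw [Finset.sum_eq_single n]
  · rw [norm_q]; ring
  · intro m _ hmn; rw [gram_zero n m hmn, mul_zero]
  · intro h; exact absurd hn h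

theorem core_bound (r : ℕ) (hr : 1 ≤ r) (p : Polynomial ℝ) (hp : p.natDegree ≤ r) :
    ip (derivative p) (derivative p) ≤ 24 * (r:ℝ)^4 * ip p p := by
  obtain ⟨a, ha⟩ := expand r p hp
  have hD : derivative p = ∑ n ∈ Finset.range (r+1), C (a n) * derivative (q n) := by
    rw [ha, map_sum]
    exact Finset.sum_congr rfl fun n _ => by
      rw [derivative_mul, derivative_C, zero_mul, zero_add]
  set E : ℕ → ℝ := fun n => |a n| * n.factorial * Real.sqrt ((n:ℝ)*((n:ℝ)+1)) with hE
  have hEnn : ∀ n, 0 ≤ E n := fun n => by rw [hE]; positivity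
  have main : ∀ n m : ℕ, m ≤ n →
      a n * a m * ip (derivative (q n)) (derivative (q m)) ≤ 2 * (E n * E m) := by
    intro n m hmn
    have h1 := gram_deriv_bound n m hmn
    have hs : ((m:ℝ)*((m:ℝ)+1)) ≤ Real.sqrt ((n:ℝ)*((n:ℝ)+1)) * Real.sqrt ((m:ℝ)*((m:ℝ)+1)) := by
      nth_rewrite 1 [← Real.mul_self_sqrt (by positivity : (0:ℝ) ≤ (m:ℝ)*((m:ℝ)+1))]
      apply mul_le_mul_of_nonneg_right _ (Real.sqrt_nonneg _)
      apply Real.sqrt_le_sqrt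
      have hmn' : (m:ℝ) ≤ (n:ℝ) := by exact_mod_cast hmn
      nlinarith [Nat.cast_nonneg (α := ℝ) m]
    calc a n * a m * ip (derivative (q n)) (derivative (q m))
        ≤ |a n * a m * ip (derivative (q n)) (derivative (q m))| := le_abs_self _
      _ = |a n| * |a m| * |ip (derivative (q n)) (derivative (q m))| := by
          rw [abs_mul, abs_mul]
      _ ≤ |a n| * |a m| * (2 * (n.factorial : ℝ) * m.factorial * ((m:ℝ)*((m:ℝ)+1))) := by
          exact mul_le_mul_of_nonneg_left h1 (by positivity)
      _ ≤ |a n| * |a m| * (2 * (n.factorial : ℝ) * m.factorial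
            * (Real.sqrt ((n:ℝ)*((n:ℝ)+1)) * Real.sqrt ((m:ℝ)*((m:ℝ)+1)))) := by
          apply mul_le_mul_of_nonneg_left _ (by positivity)
          apply mul_le_mul_of_nonneg_left hs (by positivity)
      _ = 2 * (E n * E m) := by rw [hE]; ring
  have key : ∀ n m : ℕ,
      a n * a m * ip (derivative (q n)) (derivative (q m)) ≤ 2 * (E n * E m) := by
    intro n m
    rcases le_total m n with h | h
    · exact main n m h
    · calc a n * a m * ip (derivative (q n)) (derivative (q m))
          = a m * a n * ip (derivative (q m)) (derivative (q n)) := by rw [ip_comm]; ring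
        _ ≤ 2 * (E m * E n) := main m n h
        _ = 2 * (E n * E m) := by ring
  have step1 : ip (derivative p) (derivative p)
      ≤ 2 * ((∑ n ∈ Finset.range (r+1), E n) * (∑ n ∈ Finset.range (r+1), E n)) := by
    rw [hD, ip_bilin]
    calc ∑ n ∈ Finset.range (r+1), ∑ m ∈ Finset.range (r+1),
            a n * a m * ip (derivative (q n)) (derivative (q m))
        ≤ ∑ n ∈ Finset.range (r+1), ∑ m ∈ Finset.range (r+1), 2 * (E n * E m) :=
          Finset.sum_le_sum fun n _ => Finset.sum_le_sum fun m _ => key n m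
      _ = 2 * ((∑ n ∈ Finset.range (r+1), E n) * (∑ n ∈ Finset.range (r+1), E n)) := by
          rw [Finset.sum_mul_sum, Finset.mul_sum]
          exact Finset.sum_congr rfl fun n _ => by rw [Finset.mul_sum]
  have CS : (∑ n ∈ Finset.range (r+1), E n) * (∑ n ∈ Finset.range (r+1), E n)
      ≤ ip p p * ∑ n ∈ Finset.range (r+1), ((2*(n:ℝ)+1) * ((n:ℝ)*((n:ℝ)+1))) := by
    have hfg : ∀ n : ℕ, E n = (|a n| * n.factorial / Real.sqrt (2*(n:ℝ)+1))
        * Real.sqrt ((2*(n:ℝ)+1) * ((n:ℝ)*((n:ℝ)+1))) := by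
      intro n
      rw [Real.sqrt_mul (by positivity)]
      have hne : Real.sqrt (2*(n:ℝ)+1) ≠ 0 := by positivity
      rw [hE]
      field_simp
    have hCS := Finset.sum_mul_sq_le_sq_mul_sq (Finset.range (r+1))
      (fun n => |a n| * n.factorial / Real.sqrt (2*(n:ℝ)+1))
      (fun n => Real.sqrt ((2*(n:ℝ)+1) * ((n:ℝ)*((n:ℝ)+1))))
    have e1 : ∑ n ∈ Finset.range (r+1),
        (|a n| * (n.factorial:ℝ) / Real.sqrt (2*(n:ℝ)+1))^2 = ip p p := by
      rw [ha, parseval]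
      refine Finset.sum_congr rfl fun n _ => ?_
      rw [div_pow, mul_pow, sq_abs, Real.sq_sqrt (by positivity)]
      ring
    have e2 : ∀ n : ℕ, (Real.sqrt ((2*(n:ℝ)+1) * ((n:ℝ)*((n:ℝ)+1))))^2
        = (2*(n:ℝ)+1) * ((n:ℝ)*((n:ℝ)+1)) := fun n => Real.sq_sqrt (by positivity)
    calc (∑ n ∈ Finset.range (r+1), E n) * (∑ n ∈ Finset.range (r+1), E n)
        = (∑ n ∈ Finset.range (r+1), (|a n| * n.factorial / Real.sqrt (2*(n:ℝ)+1))
            * Real.sqrt ((2*(n:ℝ)+1) * ((n:ℝ)*((n:ℝ)+1))))^2 := by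
          rw [sq]
          congr 1 <;> exact Finset.sum_congr rfl fun n _ => hfg n
      _ ≤ (∑ n ∈ Finset.range (r+1), (|a n| * (n.factorial:ℝ) / Real.sqrt (2*(n:ℝ)+1))^2)
            * ∑ n ∈ Finset.range (r+1), (Real.sqrt ((2*(n:ℝ)+1) * ((n:ℝ)*((n:ℝ)+1))))^2 :=
          hCS
      _ = ip p p * ∑ n ∈ Finset.range (r+1), ((2*(n:ℝ)+1) * ((n:ℝ)*((n:ℝ)+1))) := by
          rw [e1]
          congr 1
          exact Finset.sum_congr rfl fun n _ => e2 n
  have hS : (∑ n ∈ Finset.range (r+1), ((2*(n:ℝ)+1) * ((n:ℝ)*((n:ℝ)+1)))) ≤ 12 * (r:ℝ)^4 := by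
    have hr' : (1:ℝ) ≤ (r:ℝ) := by exact_mod_cast hr
    calc ∑ n ∈ Finset.range (r+1), ((2*(n:ℝ)+1) * ((n:ℝ)*((n:ℝ)+1)))
        ≤ ∑ _n ∈ Finset.range (r+1), 6*(r:ℝ)^3 := by
          refine Finset.sum_le_sum fun n hn => ?_
          have hn' : (n:ℝ) ≤ (r:ℝ) := by
            simp only [Finset.mem_range] at hn
            exact_mod_cast (by omega : n ≤ r)
          have hn0 : (0:ℝ) ≤ (n:ℝ) := Nat.cast_nonneg n
          have b1 : 2*(n:ℝ)+1 ≤ 3*(r:ℝ) := by linarith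
          have b2 : (n:ℝ)+1 ≤ 2*(r:ℝ) := by linarith
          calc (2*(n:ℝ)+1) * ((n:ℝ)*((n:ℝ)+1))
              ≤ (3*(r:ℝ)) * ((r:ℝ)*(2*(r:ℝ))) := by
                apply mul_le_mul b1 ?_ (by positivity) (by positivity)
                apply mul_le_mul hn' b2 (by positivity) (by linarith)
            _ = 6*(r:ℝ)^3 := by ring
      _ = ((r:ℝ)+1) * (6*(r:ℝ)^3) := by
          rw [Finset.sum_const, Finset.card_range, nsmul_eq_mul]
          push_cast
          ring
      _ ≤ 12 * (r:ℝ)^4 := by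
          have h3 : (0:ℝ) ≤ (r:ℝ)^3 := by positivity
          nlinarith [h3]
  have hpp := ip_self_nonneg p
  calc ip (derivative p) (derivative p)
      ≤ 2 * ((∑ n ∈ Finset.range (r+1), E n) * (∑ n ∈ Finset.range (r+1), E n)) := step1
    _ ≤ 2 * (ip p p * ∑ n ∈ Finset.range (r+1), ((2*(n:ℝ)+1) * ((n:ℝ)*((n:ℝ)+1)))) := by
        linarith [CS]
    _ ≤ 2 * (ip p p * (12 * (r:ℝ)^4)) := by
        apply mul_le_mul_of_nonneg_left _ (by norm_num)
        exact mul_le_mul_of_nonneg_left hS hpp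
    _ = 24 * (r:ℝ)^4 * ip p p := by ring

end HpInv

open HpInv

theorem hp_inverse_inequality_1d :
    ∃ C : ℝ, 0 < C ∧
      ∀ (r : ℕ) (h : ℝ), 0 < h → ∀ v : Polynomial ℝ, v.natDegree ≤ r →
        Real.sqrt (∫ x in (0 : ℝ)..h, ((Polynomial.derivative v).eval x) ^ 2) ≤
          C * (r : ℝ) ^ 2 / h * Real.sqrt (∫ x in (0 : ℝ)..h, (v.eval x) ^ 2) := by
  refine ⟨5, by norm_num, ?_⟩
  intro r h hh v hv
  have hB0 : 0 ≤ ∫ x in (0:ℝ)..h, (v.eval x)^2 :=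
    intervalIntegral.integral_nonneg hh.le (fun x _ => sq_nonneg _)
  rcases Nat.eq_zero_or_pos r with hr0 | hr
  · -- r = 0 : v is constant, derivative is 0
    subst hr0
    have hv0 : v.natDegree = 0 := Nat.le_zero.mp hv
    have hd : derivative v = 0 := by
      rw [Polynomial.eq_C_of_natDegree_le_zero hv0.le, derivative_C]
    rw [hd]
    simp
  · -- main case
    set u : Polynomial ℝ := v.comp (C h * X) with hu
    have hdu : derivative u = C h * ((derivative v).comp (C h * X)) := by
      rw [hu, derivative_comp, derivative_mul, derivative_C, derivative_X, zero_mul,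
        mul_one, zero_add]
    have hueval : ∀ x : ℝ, u.eval x = v.eval (h * x) := by
      intro x; rw [hu, eval_comp]; simp
    have hdueval : ∀ x : ℝ, (derivative u).eval x = h * (derivative v).eval (h * x) := by
      intro x; rw [hdu]; simp [eval_comp]
    have hdeg : u.natDegree ≤ r := by
      refine le_trans natDegree_comp_le ?_
      rw [natDegree_C_mul_X h hh.ne']
      simpa using hv
    set A : ℝ := ∫ x in (0:ℝ)..h, ((derivative v).eval x)^2 with hA
    set B : ℝ := ∫ x in (0:ℝ)..h, (v.eval x)^2 with hB
    have hA0 : 0 ≤ A := intervalIntegral.integral_nonneg hh.le (fun x _ => sq_nonneg _)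
    have cov1 : ip u u = h⁻¹ * B := by
      rw [ip, hB]
      have e1 : (fun x : ℝ => u.eval x * u.eval x)
          = fun x : ℝ => (fun y : ℝ => (v.eval y)^2) (h * x) := by
        funext x; rw [hueval]; ring
      rw [e1, intervalIntegral.integral_comp_mul_left (fun y : ℝ => (v.eval y)^2) hh.ne',
        mul_zero, mul_one, smul_eq_mul]
    have cov2 : ip (derivative u) (derivative u) = h * A := by
      rw [ip, hA]
      have e1 : (fun x : ℝ => (derivative u).eval x * (derivative u).eval x)
          = fun x : ℝ => h^2 * ((fun y : ℝ => ((derivative v).eval y)^2) (h * x)) := by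
        funext x; rw [hdueval]; ring
      rw [e1, intervalIntegral.integral_const_mul,
        intervalIntegral.integral_comp_mul_left (fun y : ℝ => ((derivative v).eval y)^2)
          hh.ne', mul_zero, mul_one, smul_eq_mul]
      field_simp
      try ring
    have hcore := core_bound r hr u hdeg
    rw [cov1, cov2] at hcore
    -- h * A ≤ 24 r^4 * (h⁻¹ * B)  ⟹  A ≤ 24 r^4 / h^2 * B
    have hAB : A ≤ 24 * (r:ℝ)^4 / h^2 * B := by
      rw [div_mul_eq_mul_div, le_div_iff₀ (by positivity)]
      calc A * h^2 = h * (h * A) := by ring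
        _ ≤ h * (24 * (r:ℝ)^4 * (h⁻¹ * B)) :=
            mul_le_mul_of_nonneg_left hcore hh.le
        _ = 24 * (r:ℝ)^4 * B := by field_simp
    calc Real.sqrt A ≤ Real.sqrt (24 * (r:ℝ)^4 / h^2 * B) := Real.sqrt_le_sqrt hAB
      _ = Real.sqrt (24 * (r:ℝ)^4 / h^2) * Real.sqrt B := Real.sqrt_mul (by positivity) _
      _ ≤ (5 * (r:ℝ)^2 / h) * Real.sqrt B := by
          apply mul_le_mul_of_nonneg_right _ (Real.sqrt_nonneg _)
          rw [show 24 * (r:ℝ)^4 / h^2 = ((r:ℝ)^2/h)^2 * 24 from by field_simp,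
            Real.sqrt_mul (by positivity)]
          rw [Real.sqrt_sq (by positivity)]
          have h24 : Real.sqrt 24 ≤ 5 := by
            have h25 : Real.sqrt 24 ≤ Real.sqrt 25 := Real.sqrt_le_sqrt (by norm_num)
            rwa [show (25:ℝ) = 5^2 by norm_num, Real.sqrt_sq (by norm_num : (0:ℝ) ≤ 5)]
              at h25
          calc (r:ℝ)^2/h * Real.sqrt 24 ≤ (r:ℝ)^2/h * 5 :=
                mul_le_mul_of_nonneg_left h24 (by positivity)
            _ = 5 * (r:ℝ)^2 / h := by ring

end
end
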